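/- arXiv:2010.14758 — 2 statements merged into one kernel-verified Lean document; each statement's English description precedes it below -/
import Mathlib

section
/- The decoding threshold equals the largest channel parameter below which no non-trivial fixed point exists: ε2* = sup{ ε ∈ [0,1] : there is no (f,g)-fixed point (x,y) for ε with x ∈ (0,1] and y ∈ [0,1] }. -/
open Polynomial Set Filter

/-- A polynomial with nonnegative coefficients is monotone on nonnegative reals. -/
lemma poly_mono_aux (p : Polynomial ℝ) (hp : ∀ i, 0 ≤ p.coeff i) {a b : ℝ}
    (ha : 0 ≤ a) (hab : a ≤ b) : p.eval a ≤ p.eval b := by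
  rw [Polynomial.eval_eq_sum_range, Polynomial.eval_eq_sum_range]
  apply Finset.sum_le_sum
  intro i _
  exact mul_le_mul_of_nonneg_left (pow_le_pow_left₀ ha hab i) (hp i)

lemma poly_nonneg_aux (p : Polynomial ℝ) (hp : ∀ i, 0 ≤ p.coeff i) {a : ℝ}
    (ha : 0 ≤ a) : 0 ≤ p.eval a := by
  have h0 : p.eval 0 ≤ p.eval a := poly_mono_aux p hp le_rfl ha
  have : p.coeff 0 = p.eval 0 := Polynomial.coeff_zero_eq_eval_zero p
  linarith [hp 0]

lemma prod3_mono_aux {ε a b a' b' : ℝ} (hε : 0 ≤ ε) (ha : 0 ≤ a) (hab : a ≤ a')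
    (hb : 0 ≤ b) (hbb : b ≤ b') : ε * a * b ≤ ε * a' * b' := by
  have h1 : ε * a ≤ ε * a' := mul_le_mul_of_nonneg_left hab hε
  have h2 : 0 ≤ ε * a' := mul_nonneg hε (le_trans ha hab)
  exact mul_le_mul h1 hbb hb h2

/-- Theorem 1: the decoding threshold equals the supremum of channel parameters for which
no non-trivial `(f,g)`-fixed point exists. -/
theorem stmt_5
    (L1 R1 L2 R2 B1 B2 : Polynomial ℝ)
    (hL1c : ∀ i, 0 ≤ L1.coeff i) (hR1c : ∀ i, 0 ≤ R1.coeff i)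
    (hL2c : ∀ i, 0 ≤ L2.coeff i) (hR2c : ∀ i, 0 ≤ R2.coeff i)
    (hB1c : ∀ i, 0 ≤ B1.coeff i) (hB2c : ∀ i, 0 ≤ B2.coeff i)
    (hL1one : L1.eval 1 = 1) (hR1one : R1.eval 1 = 1)
    (hL2one : L2.eval 1 = 1) (hR2one : R2.eval 1 = 1)
    (hB1one : B1.eval 1 = 1) (hB2one : B2.eval 1 = 1)
    (hL1zero : L1.eval 0 = 0) (hB10 : B1.coeff 0 = 0) (hB11 : B1.coeff 1 = 0)
    (f g : ℝ → ℝ → ℝ → ℝ)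
    (hf : ∀ ε x y, f ε x y = ε * L1.eval (1 - R1.eval (1 - x)) * B2.eval (1 - R2.eval (1 - y)))
    (hg : ∀ ε x y, g ε x y = ε * B1.eval (1 - R1.eval (1 - x)) * L2.eval (1 - R2.eval (1 - y)))
    (xs ys : ℝ → ℕ → ℝ)
    (hxs0 : ∀ e, xs e 0 = 1) (hys0 : ∀ e, ys e 0 = 1)
    (hxsrec : ∀ e l, xs e (l + 1) = f e (xs e l) (ys e l))
    (hysrec : ∀ e l, ys e (l + 1) = g e (xs e l) (ys e l)) :
    sSup {e : ℝ | e ∈ Icc (0:ℝ) 1 ∧ Tendsto (fun l => xs e l) atTop (nhds 0)} =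
      sSup {e : ℝ | e ∈ Icc (0:ℝ) 1 ∧
        ¬ ∃ x y : ℝ, x ∈ Ioc (0:ℝ) 1 ∧ y ∈ Icc (0:ℝ) 1 ∧ x = f e x y ∧ y = g e x y} := by
  -- the argument maps x ↦ 1 - R(1-x) stay in [0,1]
  have hT : ∀ (R : Polynomial ℝ), (∀ i, 0 ≤ R.coeff i) → R.eval 1 = 1 →
      ∀ x : ℝ, 0 ≤ x → x ≤ 1 → 0 ≤ 1 - R.eval (1 - x) ∧ 1 - R.eval (1 - x) ≤ 1 := by
    intro R hRc hR1 x hx0 hx1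
    constructor
    · have : R.eval (1 - x) ≤ R.eval 1 := poly_mono_aux R hRc (by linarith) (by linarith)
      linarith
    · have : 0 ≤ R.eval (1 - x) := poly_nonneg_aux R hRc (by linarith)
      linarith
  -- evaluate L at argument in [0,1]: result in [0,1] for L with L(1)=1
  have hLmem : ∀ (L : Polynomial ℝ), (∀ i, 0 ≤ L.coeff i) → L.eval 1 = 1 →
      ∀ t : ℝ, 0 ≤ t → t ≤ 1 → 0 ≤ L.eval t ∧ L.eval t ≤ 1 := by
    intro L hLc hL1 t ht0 ht1
    refine ⟨poly_nonneg_aux L hLc ht0, ?_⟩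
    have := poly_mono_aux L hLc ht0 ht1
    linarith
  suffices hset : {e : ℝ | e ∈ Icc (0:ℝ) 1 ∧ Tendsto (fun l => xs e l) atTop (nhds 0)} =
      {e : ℝ | e ∈ Icc (0:ℝ) 1 ∧
        ¬ ∃ x y : ℝ, x ∈ Ioc (0:ℝ) 1 ∧ y ∈ Icc (0:ℝ) 1 ∧ x = f e x y ∧ y = g e x y} by
    rw [hset]
  ext ε
  simp only [Set.mem_setOf_eq]
  constructor
  -- FORWARD: convergence to 0 ⇒ no nontrivial fixed point
  · rintro ⟨⟨hε0, hε1⟩, htend⟩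
    refine ⟨⟨hε0, hε1⟩, ?_⟩
    rintro ⟨x, y, ⟨hx0, hx1⟩, ⟨hy0, hy1⟩, hxf, hyg⟩
    -- fixed point is a lower bound of the DE sequence
    have hmono : ∀ {u u' v v' : ℝ}, 0 ≤ u → u ≤ u' → u' ≤ 1 → 0 ≤ v → v ≤ v' → v' ≤ 1 →
        f ε u v ≤ f ε u' v' ∧ g ε u v ≤ g ε u' v' := by
      intro u u' v v' hu0 huu hu1 hv0 hvv hv1
      have hTu := hT R1 hR1c hR1one u hu0 (le_trans huu hu1)
      have hTu' := hT R1 hR1c hR1one u' (le_trans hu0 huu) hu1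
      have hTv := hT R2 hR2c hR2one v hv0 (le_trans hvv hv1)
      have hTv' := hT R2 hR2c hR2one v' (le_trans hv0 hvv) hv1
      have hTle : 1 - R1.eval (1 - u) ≤ 1 - R1.eval (1 - u') := by
        have := poly_mono_aux R1 hR1c (by linarith) (by linarith : 1 - u' ≤ 1 - u)
        linarith
      have hTle2 : 1 - R2.eval (1 - v) ≤ 1 - R2.eval (1 - v') := by
        have := poly_mono_aux R2 hR2c (by linarith) (by linarith : 1 - v' ≤ 1 - v)
        linarith
      constructor
      · rw [hf, hf]
        exact prod3_mono_aux hε0 (poly_nonneg_aux L1 hL1c hTu.1)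
          (poly_mono_aux L1 hL1c hTu.1 hTle)
          (poly_nonneg_aux B2 hB2c hTv.1) (poly_mono_aux B2 hB2c hTv.1 hTle2)
      · rw [hg, hg]
        exact prod3_mono_aux hε0 (poly_nonneg_aux B1 hB1c hTu.1)
          (poly_mono_aux B1 hB1c hTu.1 hTle)
          (poly_nonneg_aux L2 hL2c hTv.1) (poly_mono_aux L2 hL2c hTv.1 hTle2)
    have hmem : ∀ l, (0 ≤ xs ε l ∧ xs ε l ≤ 1) ∧ (0 ≤ ys ε l ∧ ys ε l ≤ 1) := by
      intro l
      induction l with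
      | zero => rw [hxs0, hys0]; norm_num
      | succ n ih =>
        rw [hxsrec, hysrec, hf, hg]
        have hTx := hT R1 hR1c hR1one _ ih.1.1 ih.1.2
        have hTy := hT R2 hR2c hR2one _ ih.2.1 ih.2.2
        have h1 := hLmem L1 hL1c hL1one _ hTx.1 hTx.2
        have h2 := hLmem B2 hB2c hB2one _ hTy.1 hTy.2
        have h3 := hLmem B1 hB1c hB1one _ hTx.1 hTx.2
        have h4 := hLmem L2 hL2c hL2one _ hTy.1 hTy.2
        constructor
        · constructor
          · exact mul_nonneg (mul_nonneg hε0 h1.1) h2.1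
          · calc ε * L1.eval _ * B2.eval _ ≤ 1 * 1 * 1 :=
                prod3_mono_aux hε0 h1.1 h1.2 h2.1 h2.2 |>.trans
                  (by nlinarith [h2.1, h2.2])
              _ = 1 := by ring
        · constructor
          · exact mul_nonneg (mul_nonneg hε0 h3.1) h4.1
          · calc ε * B1.eval _ * L2.eval _ ≤ 1 * 1 * 1 :=
                prod3_mono_aux hε0 h3.1 h3.2 h4.1 h4.2 |>.trans
                  (by nlinarith [h4.1, h4.2])
              _ = 1 := by ring
    have hlow : ∀ l, x ≤ xs ε l ∧ y ≤ ys ε l := by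
      intro l
      induction l with
      | zero => rw [hxs0, hys0]; exact ⟨hx1, hy1⟩
      | succ n ih =>
        rw [hxsrec, hysrec]
        have := hmono (le_of_lt hx0) ih.1 (hmem n).1.2 hy0 ih.2 (hmem n).2.2
        exact ⟨hxf ▸ this.1, hyg ▸ this.2⟩
    have hxle : x ≤ 0 := ge_of_tendsto' htend (fun l => (hlow l).1)
    linarith
  -- BACKWARD: no nontrivial fixed point ⇒ convergence to 0
  · rintro ⟨⟨hε0, hε1⟩, hnofix⟩
    refine ⟨⟨hε0, hε1⟩, ?_⟩
    -- monotonicity of f, g (same as before)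
    have hmono : ∀ {u u' v v' : ℝ}, 0 ≤ u → u ≤ u' → u' ≤ 1 → 0 ≤ v → v ≤ v' → v' ≤ 1 →
        f ε u v ≤ f ε u' v' ∧ g ε u v ≤ g ε u' v' := by
      intro u u' v v' hu0 huu hu1 hv0 hvv hv1
      have hTu := hT R1 hR1c hR1one u hu0 (le_trans huu hu1)
      have hTv := hT R2 hR2c hR2one v hv0 (le_trans hvv hv1)
      have hTle : 1 - R1.eval (1 - u) ≤ 1 - R1.eval (1 - u') := by
        have := poly_mono_aux R1 hR1c (by linarith) (by linarith : 1 - u' ≤ 1 - u)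
        linarith
      have hTle2 : 1 - R2.eval (1 - v) ≤ 1 - R2.eval (1 - v') := by
        have := poly_mono_aux R2 hR2c (by linarith) (by linarith : 1 - v' ≤ 1 - v)
        linarith
      constructor
      · rw [hf, hf]
        exact prod3_mono_aux hε0 (poly_nonneg_aux L1 hL1c hTu.1)
          (poly_mono_aux L1 hL1c hTu.1 hTle)
          (poly_nonneg_aux B2 hB2c hTv.1) (poly_mono_aux B2 hB2c hTv.1 hTle2)
      · rw [hg, hg]
        exact prod3_mono_aux hε0 (poly_nonneg_aux B1 hB1c hTu.1)
          (poly_mono_aux B1 hB1c hTu.1 hTle)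
          (poly_nonneg_aux L2 hL2c hTv.1) (poly_mono_aux L2 hL2c hTv.1 hTle2)
    have hmem : ∀ l, (0 ≤ xs ε l ∧ xs ε l ≤ 1) ∧ (0 ≤ ys ε l ∧ ys ε l ≤ 1) := by
      intro l
      induction l with
      | zero => rw [hxs0, hys0]; norm_num
      | succ n ih =>
        rw [hxsrec, hysrec, hf, hg]
        have hTx := hT R1 hR1c hR1one _ ih.1.1 ih.1.2
        have hTy := hT R2 hR2c hR2one _ ih.2.1 ih.2.2
        have h1 := hLmem L1 hL1c hL1one _ hTx.1 hTx.2
        have h2 := hLmem B2 hB2c hB2one _ hTy.1 hTy.2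
        have h3 := hLmem B1 hB1c hB1one _ hTx.1 hTx.2
        have h4 := hLmem L2 hL2c hL2one _ hTy.1 hTy.2
        constructor
        · constructor
          · exact mul_nonneg (mul_nonneg hε0 h1.1) h2.1
          · nlinarith [h1.1, h1.2, h2.1, h2.2, hε0, hε1, mul_nonneg h1.1 h2.1,
              mul_le_one₀ h1.2 h2.1 h2.2]
        · constructor
          · exact mul_nonneg (mul_nonneg hε0 h3.1) h4.1
          · nlinarith [h3.1, h3.2, h4.1, h4.2, hε0, hε1, mul_nonneg h3.1 h4.1,
              mul_le_one₀ h3.2 h4.1 h4.2]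
    -- the DE sequences are antitone
    have hdec : ∀ l, xs ε (l + 1) ≤ xs ε l ∧ ys ε (l + 1) ≤ ys ε l := by
      intro l
      induction l with
      | zero =>
        rw [hxs0, hys0]
        exact ⟨(hmem 1).1.2, (hmem 1).2.2⟩
      | succ n ih =>
        have h := hmono (hmem (n+1)).1.1 ih.1 (hmem n).1.2 (hmem (n+1)).2.1 ih.2 (hmem n).2.2
        constructor
        · calc xs ε (n+1+1) = f ε (xs ε (n+1)) (ys ε (n+1)) := hxsrec ε (n+1)
            _ ≤ f ε (xs ε n) (ys ε n) := h.1
            _ = xs ε (n+1) := (hxsrec ε n).symm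
        · calc ys ε (n+1+1) = g ε (xs ε (n+1)) (ys ε (n+1)) := hysrec ε (n+1)
            _ ≤ g ε (xs ε n) (ys ε n) := h.2
            _ = ys ε (n+1) := (hysrec ε n).symm
    have hantix : Antitone (xs ε) := antitone_nat_of_succ_le fun n => (hdec n).1
    have hantiy : Antitone (ys ε) := antitone_nat_of_succ_le fun n => (hdec n).2
    have hbddx : BddBelow (Set.range (xs ε)) := ⟨0, by rintro _ ⟨l, rfl⟩; exact (hmem l).1.1⟩
    have hbddy : BddBelow (Set.range (ys ε)) := ⟨0, by rintro _ ⟨l, rfl⟩; exact (hmem l).2.1⟩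
    set a := ⨅ l, xs ε l with ha_def
    set b := ⨅ l, ys ε l with hb_def
    have htx : Tendsto (xs ε) atTop (nhds a) := tendsto_atTop_ciInf hantix hbddx
    have hty : Tendsto (ys ε) atTop (nhds b) := tendsto_atTop_ciInf hantiy hbddy
    have ha0 : 0 ≤ a := le_ciInf fun l => (hmem l).1.1
    have hb0 : 0 ≤ b := le_ciInf fun l => (hmem l).2.1
    have ha1 : a ≤ 1 := le_trans (ciInf_le hbddx 0) (by rw [hxs0])
    have hb1 : b ≤ 1 := le_trans (ciInf_le hbddy 0) (by rw [hys0])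
    -- the limit is a fixed point
    have hcont1 : Continuous fun p : ℝ × ℝ => f ε p.1 p.2 := by
      have : (fun p : ℝ × ℝ => f ε p.1 p.2) = fun p : ℝ × ℝ =>
          ε * L1.eval (1 - R1.eval (1 - p.1)) * B2.eval (1 - R2.eval (1 - p.2)) := by
        funext p; rw [hf]
      rw [this]
      exact (continuous_const.mul (L1.continuous.comp
        (continuous_const.sub (R1.continuous.comp (continuous_const.sub continuous_fst))))).mul
        (B2.continuous.comp
          (continuous_const.sub (R2.continuous.comp (continuous_const.sub continuous_snd))))
    have hcont2 : Continuous fun p : ℝ × ℝ => g ε p.1 p.2 := by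
      have : (fun p : ℝ × ℝ => g ε p.1 p.2) = fun p : ℝ × ℝ =>
          ε * B1.eval (1 - R1.eval (1 - p.1)) * L2.eval (1 - R2.eval (1 - p.2)) := by
        funext p; rw [hg]
      rw [this]
      exact (continuous_const.mul (B1.continuous.comp
        (continuous_const.sub (R1.continuous.comp (continuous_const.sub continuous_fst))))).mul
        (L2.continuous.comp
          (continuous_const.sub (R2.continuous.comp (continuous_const.sub continuous_snd))))
    have hpair : Tendsto (fun l => (xs ε l, ys ε l)) atTop (nhds (a, b)) :=
      htx.prodMk_nhds hty
    have htfx : Tendsto (fun l => f ε (xs ε l) (ys ε l)) atTop (nhds (f ε a b)) :=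
      (hcont1.tendsto (a, b)).comp hpair
    have htgy : Tendsto (fun l => g ε (xs ε l) (ys ε l)) atTop (nhds (g ε a b)) :=
      (hcont2.tendsto (a, b)).comp hpair
    have hshiftx : Tendsto (fun l => xs ε (l + 1)) atTop (nhds a) :=
      htx.comp (tendsto_add_atTop_nat 1)
    have hshifty : Tendsto (fun l => ys ε (l + 1)) atTop (nhds b) :=
      hty.comp (tendsto_add_atTop_nat 1)
    have hfixx : a = f ε a b := by
      refine tendsto_nhds_unique hshiftx ?_
      have : (fun l => xs ε (l + 1)) = fun l => f ε (xs ε l) (ys ε l) := by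
        funext l; exact hxsrec ε l
      rw [this]; exact htfx
    have hfixy : b = g ε a b := by
      refine tendsto_nhds_unique hshifty ?_
      have : (fun l => ys ε (l + 1)) = fun l => g ε (xs ε l) (ys ε l) := by
        funext l; exact hysrec ε l
      rw [this]; exact htgy
    -- hence a = 0
    have haz : a = 0 := by
      by_contra h
      have hapos : 0 < a := lt_of_le_of_ne ha0 (Ne.symm h)
      exact hnofix ⟨a, b, ⟨hapos, ha1⟩, ⟨hb0, hb1⟩, hfixx, hfixy⟩
    rw [haz] at htx
    exact htx
end

section
/- Let ε ∈ (0,1), let A ⊆ ℕ be any set of type-2 update iterations, and let the scheduled density-evolution sequences be x_0 = y_0 = 1, x_{l+1} = f(ε, x_l, y_l) for all l ≥ 0, and y_{l+1} = g(ε, x_l, y_l) if l+1 ∈ A and y_{l+1} = y_l otherwise. Let ε1 := inf{ x / λ1(1−ρ1(1−x)) : x ∈ (0,1] }. If there exists an iteration l with ε·Λ2(1−ρ2(1−y_l)) < ε1, then the decoder succeeds: x_l → 0 as l → ∞. -/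
open Polynomial Set Filter

lemma auxA_eval_nonneg (P : Polynomial ℝ) (h : ∀ i, 0 ≤ P.coeff i) {a : ℝ} (ha : 0 ≤ a) :
    0 ≤ P.eval a := by
  rw [Polynomial.eval_eq_sum_range]
  exact Finset.sum_nonneg fun i _ => mul_nonneg (h i) (pow_nonneg ha i)

lemma auxA_eval_mono (P : Polynomial ℝ) (h : ∀ i, 0 ≤ P.coeff i) {a b : ℝ}
    (ha : 0 ≤ a) (hab : a ≤ b) : P.eval a ≤ P.eval b := by
  rw [Polynomial.eval_eq_sum_range, Polynomial.eval_eq_sum_range]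
  exact Finset.sum_le_sum fun i _ =>
    mul_le_mul_of_nonneg_left (pow_le_pow_left₀ ha hab i) (h i)

lemma auxW_mem (P R : Polynomial ℝ) (hPc : ∀ i, 0 ≤ P.coeff i) (hRc : ∀ i, 0 ≤ R.coeff i)
    (hP1 : P.eval 1 = 1) (hR1 : R.eval 1 = 1)
    {x : ℝ} (hx : 0 ≤ x) (hx1 : x ≤ 1) : P.eval (1 - R.eval (1 - x)) ∈ Icc (0:ℝ) 1 := by
  have hR0 : 0 ≤ R.eval (1 - x) := auxA_eval_nonneg R hRc (by linarith)
  have hRle : R.eval (1 - x) ≤ 1 := by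
    have h : R.eval (1 - x) ≤ R.eval 1 :=
      auxA_eval_mono R hRc (show (0:ℝ) ≤ 1 - x by linarith) (by linarith)
    linarith [h, hR1.le]
  constructor
  · exact auxA_eval_nonneg P hPc (by linarith)
  · have h : P.eval (1 - R.eval (1 - x)) ≤ P.eval 1 :=
      auxA_eval_mono P hPc (show (0:ℝ) ≤ 1 - R.eval (1 - x) by linarith) (by linarith)
    linarith [h, hP1.le]

lemma auxW_mono (P R : Polynomial ℝ) (hPc : ∀ i, 0 ≤ P.coeff i) (hRc : ∀ i, 0 ≤ R.coeff i)
    (hR1 : R.eval 1 = 1) {a b : ℝ} (ha : 0 ≤ a) (hab : a ≤ b) (hb : b ≤ 1) :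
    P.eval (1 - R.eval (1 - a)) ≤ P.eval (1 - R.eval (1 - b)) := by
  have hRa : R.eval (1 - a) ≤ 1 := by
    have h : R.eval (1 - a) ≤ R.eval 1 :=
      auxA_eval_mono R hRc (show (0:ℝ) ≤ 1 - a by linarith) (by linarith)
    linarith [h, hR1.le]
  apply auxA_eval_mono P hPc
  · linarith
  · have : R.eval (1 - b) ≤ R.eval (1 - a) := auxA_eval_mono R hRc (by linarith) (by linarith)
    linarith

/-- Lemma 11 (sufficiency direction): under any scheduling of type-2 updates, if at some
iteration the effective erasure probability drops below the layer-1 threshold `ε1`, then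
decoding succeeds: `x_l → 0`. -/
theorem stmt_14
    (L1 R1 L2 R2 B1 B2 : Polynomial ℝ)
    (hL1c : ∀ i, 0 ≤ L1.coeff i) (hR1c : ∀ i, 0 ≤ R1.coeff i)
    (hL2c : ∀ i, 0 ≤ L2.coeff i) (hR2c : ∀ i, 0 ≤ R2.coeff i)
    (hB1c : ∀ i, 0 ≤ B1.coeff i) (hB2c : ∀ i, 0 ≤ B2.coeff i)
    (hL1one : L1.eval 1 = 1) (hR1one : R1.eval 1 = 1)
    (hL2one : L2.eval 1 = 1) (hR2one : R2.eval 1 = 1)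
    (hB1one : B1.eval 1 = 1) (hB2one : B2.eval 1 = 1)
    (hL1zero : L1.eval 0 = 0) (hB10 : B1.coeff 0 = 0) (hB11 : B1.coeff 1 = 0)
    (f g : ℝ → ℝ → ℝ → ℝ)
    (hf : ∀ ε x y, f ε x y = ε * L1.eval (1 - R1.eval (1 - x)) * B2.eval (1 - R2.eval (1 - y)))
    (hg : ∀ ε x y, g ε x y = ε * B1.eval (1 - R1.eval (1 - x)) * L2.eval (1 - R2.eval (1 - y)))
    (ε : ℝ) (hε : ε ∈ Ioo (0:ℝ) 1)
    (A : Set ℕ)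
    (xs ys : ℕ → ℝ)
    (hxs0 : xs 0 = 1) (hys0 : ys 0 = 1)
    (hxsrec : ∀ l, xs (l + 1) = f ε (xs l) (ys l))
    (hysrecA : ∀ l, l + 1 ∈ A → ys (l + 1) = g ε (xs l) (ys l))
    (hysrecB : ∀ l, l + 1 ∉ A → ys (l + 1) = ys l)
    (ε1 : ℝ)
    (hε1 : ε1 = sInf ((fun x => x / L1.eval (1 - R1.eval (1 - x))) '' Ioc (0:ℝ) 1))
    (hdrop : ∃ l, ε * B2.eval (1 - R2.eval (1 - ys l)) < ε1) :
    Tendsto xs atTop (nhds 0) := by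
  obtain ⟨hε0, hεlt1⟩ := hε
  -- membership of the sequences in [0,1]
  have hmem : ∀ l, xs l ∈ Icc (0:ℝ) 1 ∧ ys l ∈ Icc (0:ℝ) 1 := by
    intro l
    induction l with
    | zero => simp [hxs0, hys0]
    | succ n ih =>
      obtain ⟨⟨hx0, hx1⟩, ⟨hy0, hy1⟩⟩ := ih
      have h1 := auxW_mem L1 R1 hL1c hR1c hL1one hR1one hx0 hx1
      have h2 := auxW_mem B2 R2 hB2c hR2c hB2one hR2one hy0 hy1
      have h3 := auxW_mem B1 R1 hB1c hR1c hB1one hR1one hx0 hx1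
      have h4 := auxW_mem L2 R2 hL2c hR2c hL2one hR2one hy0 hy1
      refine ⟨?_, ?_⟩
      · rw [hxsrec, hf]
        constructor
        · exact mul_nonneg (mul_nonneg hε0.le h1.1) h2.1
        · exact mul_le_one₀ (mul_le_one₀ hεlt1.le h1.1 h1.2) h2.1 h2.2
      · by_cases hA : n + 1 ∈ A
        · rw [hysrecA n hA, hg]
          constructor
          · exact mul_nonneg (mul_nonneg hε0.le h3.1) h4.1
          · exact mul_le_one₀ (mul_le_one₀ hεlt1.le h3.1 h3.2) h4.1 h4.2
        · rw [hysrecB n hA]; exact ⟨hy0, hy1⟩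
  -- monotonicity of f and g in (x,y)
  have fmono : ∀ a b a' b' : ℝ, 0 ≤ a → a ≤ a' → a' ≤ 1 → 0 ≤ b → b ≤ b' → b' ≤ 1 →
      f ε a b ≤ f ε a' b' := by
    intro a b a' b' ha haa' ha1 hb hbb' hb1
    rw [hf, hf]
    have h1 := auxW_mono L1 R1 hL1c hR1c hR1one ha haa' ha1
    have h2 := auxW_mono B2 R2 hB2c hR2c hR2one hb hbb' hb1
    have h3 := auxW_mem L1 R1 hL1c hR1c hL1one hR1one ha (haa'.trans ha1)
    have h4 := auxW_mem B2 R2 hB2c hR2c hB2one hR2one hb (hbb'.trans hb1)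
    have h5 := auxW_mem L1 R1 hL1c hR1c hL1one hR1one (ha.trans haa') ha1
    have h6 := auxW_mem B2 R2 hB2c hR2c hB2one hR2one (hb.trans hbb') hb1
    rw [mul_assoc, mul_assoc]
    exact mul_le_mul_of_nonneg_left (mul_le_mul h1 h2 h4.1 h5.1) hε0.le
  have gmono : ∀ a b a' b' : ℝ, 0 ≤ a → a ≤ a' → a' ≤ 1 → 0 ≤ b → b ≤ b' → b' ≤ 1 →
      g ε a b ≤ g ε a' b' := by
    intro a b a' b' ha haa' ha1 hb hbb' hb1
    rw [hg, hg]
    have h1 := auxW_mono B1 R1 hB1c hR1c hR1one ha haa' ha1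
    have h2 := auxW_mono L2 R2 hL2c hR2c hR2one hb hbb' hb1
    have h3 := auxW_mem B1 R1 hB1c hR1c hB1one hR1one ha (haa'.trans ha1)
    have h4 := auxW_mem L2 R2 hL2c hR2c hL2one hR2one hb (hbb'.trans hb1)
    have h5 := auxW_mem B1 R1 hB1c hR1c hB1one hR1one (ha.trans haa') ha1
    have h6 := auxW_mem L2 R2 hL2c hR2c hL2one hR2one (hb.trans hbb') hb1
    rw [mul_assoc, mul_assoc]
    exact mul_le_mul_of_nonneg_left (mul_le_mul h1 h2 h4.1 h5.1) hε0.le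
  -- structure of ys values
  have ystruct : ∀ k, ys k = 1 ∨ ∃ j < k, ys k = g ε (xs j) (ys j) := by
    intro k
    induction k with
    | zero => left; exact hys0
    | succ n ih =>
      by_cases hA : n + 1 ∈ A
      · right; exact ⟨n, Nat.lt_succ_self n, hysrecA n hA⟩
      · rw [hysrecB n hA]
        rcases ih with h1 | ⟨j, hj, hje⟩
        · left; exact h1
        · right; exact ⟨j, hj.trans (Nat.lt_succ_self n), hje⟩
  -- one-step antitonicity
  have step : ∀ k, xs (k + 1) ≤ xs k ∧ ys (k + 1) ≤ ys k := by
    intro k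
    induction k using Nat.strong_induction_on with
    | _ k ih =>
    have chainx : ∀ b, b ≤ k → ∀ a, a ≤ b → xs b ≤ xs a := by
      intro b
      induction b with
      | zero => intro _ a ha; rw [Nat.le_zero.mp ha]
      | succ n ihn =>
        intro hbk a hab
        rcases Nat.eq_or_lt_of_le hab with rfl | h
        · exact le_refl _
        · have h1 : a ≤ n := Nat.lt_succ_iff.mp h
          have h2 := (ih n (Nat.lt_of_lt_of_le (Nat.lt_succ_self n) hbk)).1
          exact h2.trans (ihn (Nat.le_of_succ_le hbk) a h1)
    have chainy : ∀ b, b ≤ k → ∀ a, a ≤ b → ys b ≤ ys a := by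
      intro b
      induction b with
      | zero => intro _ a ha; rw [Nat.le_zero.mp ha]
      | succ n ihn =>
        intro hbk a hab
        rcases Nat.eq_or_lt_of_le hab with rfl | h
        · exact le_refl _
        · have h1 : a ≤ n := Nat.lt_succ_iff.mp h
          have h2 := (ih n (Nat.lt_of_lt_of_le (Nat.lt_succ_self n) hbk)).2
          exact h2.trans (ihn (Nat.le_of_succ_le hbk) a h1)
    constructor
    · -- xs step
      cases k with
      | zero =>
        rw [hxsrec, hxs0, hys0, hf]
        have h1 := auxW_mem L1 R1 hL1c hR1c hL1one hR1one zero_le_one le_rfl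
        have h2 := auxW_mem B2 R2 hB2c hR2c hB2one hR2one zero_le_one le_rfl
        exact mul_le_one₀ (mul_le_one₀ hεlt1.le h1.1 h1.2) h2.1 h2.2
      | succ m =>
        rw [hxsrec (m + 1)]
        exact (fmono _ _ _ _ (hmem (m + 1)).1.1 (ih m (Nat.lt_succ_self m)).1 (hmem m).1.2
          (hmem (m + 1)).2.1 (ih m (Nat.lt_succ_self m)).2 (hmem m).2.2).trans (hxsrec m).ge
    · -- ys step
      by_cases hA : k + 1 ∈ A
      · rw [hysrecA k hA]
        rcases ystruct k with h1 | ⟨j, hjk, hje⟩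
        · rw [h1, hg]
          have h3 := auxW_mem B1 R1 hB1c hR1c hB1one hR1one (hmem k).1.1 (hmem k).1.2
          have h4 := auxW_mem L2 R2 hL2c hR2c hL2one hR2one zero_le_one le_rfl
          exact mul_le_one₀ (mul_le_one₀ hεlt1.le h3.1 h3.2) h4.1 h4.2
        · exact (gmono _ _ _ _ (hmem k).1.1 (chainx k le_rfl j hjk.le) (hmem j).1.2
            (hmem k).2.1 (chainy k le_rfl j hjk.le) (hmem j).2.2).trans hje.ge
      · rw [hysrecB k hA]
  have hxanti : Antitone xs := antitone_nat_of_succ_le fun n => (step n).1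
  have hyanti : Antitone ys := antitone_nat_of_succ_le fun n => (step n).2
  -- effective erasure probability bound
  obtain ⟨L, hL⟩ := hdrop
  set c : ℝ := ε * B2.eval (1 - R2.eval (1 - ys L)) with hc
  have hcnn : 0 ≤ c :=
    mul_nonneg hε0.le (auxW_mem B2 R2 hB2c hR2c hB2one hR2one (hmem L).2.1 (hmem L).2.2).1
  have heff : ∀ l, L ≤ l → ε * B2.eval (1 - R2.eval (1 - ys l)) ≤ c := by
    intro l hl
    exact mul_le_mul_of_nonneg_left
      (auxW_mono B2 R2 hB2c hR2c hR2one (hmem l).2.1 (hyanti hl) (hmem L).2.2) hε0.le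
  -- ε1 is below each quotient
  have hε1le : ∀ x : ℝ, 0 < x → x ≤ 1 → ε1 ≤ x / L1.eval (1 - R1.eval (1 - x)) := by
    intro x h0 h1
    rw [hε1]
    apply csInf_le
    · refine ⟨0, ?_⟩
      rintro v ⟨x', ⟨hx'0, hx'1⟩, rfl⟩
      exact div_nonneg hx'0.le
        (auxW_mem L1 R1 hL1c hR1c hL1one hR1one hx'0.le hx'1).1
    · exact ⟨x, ⟨h0, h1⟩, rfl⟩
  -- convergence of xs to its infimum
  have hbdd : BddBelow (Set.range xs) := ⟨0, by rintro v ⟨l, rfl⟩; exact (hmem l).1.1⟩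
  have htend : Tendsto xs atTop (nhds (⨅ l, xs l)) := tendsto_atTop_ciInf hxanti hbdd
  set t : ℝ := ⨅ l, xs l with htdef
  have ht0 : 0 ≤ t := le_ciInf fun l => (hmem l).1.1
  have ht1 : t ≤ 1 := (ciInf_le hbdd 0).trans_eq hxs0
  have hteq : t = 0 := by
    by_contra hne
    have htpos : 0 < t := lt_of_le_of_ne ht0 (Ne.symm hne)
    have hDcont : Continuous (fun x : ℝ => c * L1.eval (1 - R1.eval (1 - x))) :=
      continuous_const.mul (L1.continuous.comp
        (continuous_const.sub (R1.continuous.comp (continuous_const.sub continuous_id))))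
    have h1 : Tendsto (fun l => xs (l + 1)) atTop (nhds t) :=
      htend.comp (tendsto_add_atTop_nat 1)
    have h2 : Tendsto (fun l => c * L1.eval (1 - R1.eval (1 - xs l))) atTop
        (nhds (c * L1.eval (1 - R1.eval (1 - t)))) := (hDcont.tendsto t).comp htend
    have hle : ∀ᶠ l in atTop, xs (l + 1) ≤ c * L1.eval (1 - R1.eval (1 - xs l)) := by
      refine eventually_atTop.2 ⟨L, fun l hl => ?_⟩
      rw [hxsrec, hf]
      have hWnn := (auxW_mem L1 R1 hL1c hR1c hL1one hR1one (hmem l).1.1 (hmem l).1.2).1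
      calc ε * L1.eval (1 - R1.eval (1 - xs l)) * B2.eval (1 - R2.eval (1 - ys l))
          = (ε * B2.eval (1 - R2.eval (1 - ys l))) * L1.eval (1 - R1.eval (1 - xs l)) := by ring
        _ ≤ c * L1.eval (1 - R1.eval (1 - xs l)) :=
            mul_le_mul_of_nonneg_right (heff l hl) hWnn
    have hkey : t ≤ c * L1.eval (1 - R1.eval (1 - t)) :=
      le_of_tendsto_of_tendsto h1 h2 hle
    set D : ℝ := L1.eval (1 - R1.eval (1 - t)) with hDdef
    have hD0 : 0 ≤ D := (auxW_mem L1 R1 hL1c hR1c hL1one hR1one ht0 ht1).1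
    rcases eq_or_lt_of_le hD0 with hD | hD
    · rw [← hD, mul_zero] at hkey; linarith
    · have hq : ε1 ≤ t / D := hε1le t htpos ht1
      have hcq : c < t / D := lt_of_lt_of_le hL hq
      have : c * D < t := (lt_div_iff₀ hD).mp hcq
      linarith
  rw [htdef] at hteq
  rw [← hteq]
  exact htend
end
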